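/- For each u ∈ {0,1}^{ℤ_{>0}}, the projection f_u: Y_u → [0,1] onto the first coordinate, (x₁,x₂) ↦ x₁, is a bijection satisfying (1/√2)·d(x,y) ≤ |f_u(x) − f_u(y)| ≤ d(x,y) for all x, y ∈ Y_u. Consequently d_L([0,1], Y_u) ≤ (1/2) log 2. -/

import Mathlib

open ENNReal

/-- The dilation (smallest Lipschitz constant) of a map between metric spaces. -/
noncomputable def dil {X : Type*} {Y : Type*} [MetricSpace X] [MetricSpace Y]
    (f : X → Y) : ℝ :=
  sInf {K : ℝ | ∀ x y : X, dist (f x) (f y) ≤ K * dist x y}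

/-- A bijection is a bi-Lipschitz homeomorphism if it and its inverse are Lipschitz. -/
def IsBiLipschitzEquiv {X : Type*} {Y : Type*} [MetricSpace X] [MetricSpace Y]
    (f : X ≃ Y) : Prop :=
  (∃ K : NNReal, LipschitzWith K f) ∧ (∃ K : NNReal, LipschitzWith K f.symm)

/-- The quantity `|log dil f| + |log dil f⁻¹|`. -/
noncomputable def lipCost {X : Type*} {Y : Type*} [MetricSpace X] [MetricSpace Y]
    (f : X ≃ Y) : ℝ :=
  |Real.log (dil (f : X → Y))| + |Real.log (dil (f.symm : Y → X))|

/-- The Lipschitz distance: the infimum of `|log dil f| + |log dil f⁻¹|` over all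
bi-Lipschitz homeomorphisms `f : X → Y` (`∞` if none exists). -/
noncomputable def lipDist (X : Type*) (Y : Type*) [MetricSpace X] [MetricSpace Y] : ℝ≥0∞ :=
  ⨅ (f : X ≃ Y) (_ : IsBiLipschitzEquiv f), ENNReal.ofReal (lipCost f)

/-- The Euclidean plane. -/
abbrev E2 := EuclideanSpace ℝ (Fin 2)

/-- The flat part `J(n,0)` and the pulse part `J(n,1)` in `ℝ²`. -/
def Jset (n : ℕ+) : Bool → Set E2
  | false => {p | 1/2^(n:ℕ) ≤ p 0 ∧ p 0 ≤ 1/2^((n:ℕ)-1) ∧ p 1 = 0}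
  | true =>
      {p | 3/2^((n:ℕ)+1) ≤ p 0 ∧ p 0 ≤ 1/2^((n:ℕ)-1) ∧ p 1 = 0} ∪
      {p | 5/2^((n:ℕ)+2) ≤ p 0 ∧ p 0 ≤ 3/2^((n:ℕ)+1) ∧ p 1 = 3/2^((n:ℕ)+1) - p 0} ∪
      {p | 1/2^(n:ℕ) ≤ p 0 ∧ p 0 ≤ 5/2^((n:ℕ)+2) ∧ p 1 = p 0 - 1/2^(n:ℕ)}

/-- `Y_u = {(0,0)} ∪ ⋃_{n ≥ 1} J(n, u_n) ⊂ ℝ²` with the Euclidean metric. -/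
def Yset (u : ℕ+ → Bool) : Set E2 :=
  {p | p 0 = 0 ∧ p 1 = 0} ∪ ⋃ n : ℕ+, Jset n (u n)

namespace ProjAux

/-- points of the plane -/
def pt (x y : ℝ) : E2 := WithLp.toLp 2 ![x, y]

lemma pt0 (x y : ℝ) : pt x y 0 = x := rfl
lemma pt1 (x y : ℝ) : pt x y 1 = y := rfl

lemma e2_ext {p q : E2} (h0 : p 0 = q 0) (h1 : p 1 = q 1) : p = q := by
  apply PiLp.ext; intro i; fin_cases i <;> assumption

lemma dist_e2 (p q : E2) : dist p q = Real.sqrt ((p 0 - q 0)^2 + (p 1 - q 1)^2) := by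
  rw [EuclideanSpace.dist_eq]
  simp [Fin.sum_univ_two, Real.dist_eq, sq_abs]

lemma abs0_le_dist (p q : E2) : |p 0 - q 0| ≤ dist p q := by
  rw [dist_e2, ← Real.sqrt_sq_eq_abs]
  exact Real.sqrt_le_sqrt (by nlinarith [sq_nonneg (p 1 - q 1)])

lemma dist_le_sqrt2 (p q : E2) (h : |p 1 - q 1| ≤ |p 0 - q 0|) :
    dist p q ≤ Real.sqrt 2 * |p 0 - q 0| := by
  rw [dist_e2]
  have h2 : (p 1 - q 1)^2 ≤ (p 0 - q 0)^2 := by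
    rw [← sq_abs (p 1 - q 1), ← sq_abs (p 0 - q 0)]
    exact pow_le_pow_left₀ (abs_nonneg _) h 2
  calc Real.sqrt ((p 0 - q 0)^2 + (p 1 - q 1)^2)
      ≤ Real.sqrt (2 * (p 0 - q 0)^2) := Real.sqrt_le_sqrt (by linarith)
    _ = Real.sqrt 2 * |p 0 - q 0| := by
        rw [Real.sqrt_mul (by norm_num), Real.sqrt_sq_eq_abs]

/-- the left endpoint of the n-th interval -/
noncomputable def av (n : ℕ+) : ℝ := 1/2^(n:ℕ)

lemma av_pos (n : ℕ+) : 0 < av n := by rw [av]; positivity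

lemma av_le_half (n : ℕ+) : av n ≤ 1/2 := by
  have h : (2:ℝ)^(1:ℕ) ≤ 2^(n:ℕ) := pow_le_pow_right₀ one_le_two n.one_le
  rw [pow_one] at h
  have hp : (0:ℝ) < 2^(n:ℕ) := by positivity
  rw [av, div_le_div_iff₀ hp (by norm_num : (0:ℝ) < 2)]
  linarith

lemma c1 (n : ℕ+) : (1:ℝ)/2^((n:ℕ)-1) = 2 * av n := by
  obtain ⟨M, hM⟩ : ∃ M, (n:ℕ) = M + 1 := ⟨(n:ℕ)-1, (Nat.succ_pred_eq_of_pos n.2).symm⟩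
  rw [av, hM, Nat.add_sub_cancel, pow_succ]
  have : (2:ℝ)^M ≠ 0 := by positivity
  field_simp

lemma c2 (n : ℕ+) : (3:ℝ)/2^((n:ℕ)+1) = 3/2 * av n := by
  rw [av, pow_succ]
  have : (2:ℝ)^(n:ℕ) ≠ 0 := by positivity
  field_simp

lemma c3 (n : ℕ+) : (5:ℝ)/2^((n:ℕ)+2) = 5/4 * av n := by
  rw [av, pow_add]
  have : (2:ℝ)^(n:ℕ) ≠ 0 := by positivity
  field_simp; ring

lemma two_av_le {n m : ℕ+} (h : n < m) : 2 * av m ≤ av n := by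
  have hc : (n:ℕ) + 1 ≤ (m:ℕ) := by exact_mod_cast h
  have h1 : (2:ℝ)^((n:ℕ)+1) ≤ 2^(m:ℕ) := pow_le_pow_right₀ one_le_two hc
  rw [pow_succ] at h1
  rw [av, av, show 2*(1/2^(m:ℕ)) = (2:ℝ)/2^(m:ℕ) by ring,
    div_le_div_iff₀ (by positivity) (by positivity)]
  nlinarith [pow_pos (show (0:ℝ) < 2 by norm_num) (n:ℕ)]

/-- the tent/pulse function -/
noncomputable def pulse (c x : ℝ) : ℝ := max 0 (min (x - c) (3/2*c - x))

lemma pulse_nonneg (c x : ℝ) : 0 ≤ pulse c x := le_max_left _ _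

lemma pulse_le_sub {c x : ℝ} (h : c ≤ x) : pulse c x ≤ x - c :=
  max_le (by linarith) (min_le_left _ _)

lemma pulse_le_max (c x : ℝ) : pulse c x ≤ max 0 (3/2*c - x) :=
  max_le_max le_rfl (min_le_right _ _)

lemma pulse_eq_left {c x : ℝ} (h1 : c ≤ x) (h2 : x ≤ 5/4*c) : pulse c x = x - c := by
  rw [pulse, min_eq_left (by linarith), max_eq_right (by linarith)]

lemma pulse_eq_mid {c x : ℝ} (h1 : 5/4*c ≤ x) (h2 : x ≤ 3/2*c) : pulse c x = 3/2*c - x := by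
  rw [pulse, min_eq_right (by linarith), max_eq_right (by linarith)]

lemma pulse_eq_right {c x : ℝ} (h : 3/2*c ≤ x) : pulse c x = 0 := by
  rw [pulse, max_eq_left (le_trans (min_le_right _ _) (by linarith))]

lemma pulse_lipschitz (c x y : ℝ) : |pulse c x - pulse c y| ≤ |x - y| := by
  have h1 := abs_min_sub_min_le_max (x-c) (3/2*c-x) (y-c) (3/2*c-y)
  have h2 := abs_max_sub_max_le_max 0 (min (x-c) (3/2*c-x)) 0 (min (y-c) (3/2*c-y))
  have e1 : x - c - (y - c) = x - y := by ring
  have e2 : 3/2*c - x - (3/2*c - y) = -(x - y) := by ring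
  rw [e1, e2, abs_neg, max_self] at h1
  rw [sub_self, abs_zero] at h2
  calc |pulse c x - pulse c y| ≤ max 0 |min (x-c) (3/2*c-x) - min (y-c) (3/2*c-y)| := h2
    _ ≤ |x - y| := max_le (abs_nonneg _) h1

lemma mem_false_iff (n : ℕ+) (p : E2) :
    p ∈ Jset n false ↔ av n ≤ p 0 ∧ p 0 ≤ 2 * av n ∧ p 1 = 0 := by
  show (1/2^(n:ℕ) ≤ p 0 ∧ p 0 ≤ 1/2^((n:ℕ)-1) ∧ p 1 = 0) ↔ _
  rw [c1 n]; rfl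

lemma mem_true_iff (n : ℕ+) (p : E2) :
    p ∈ Jset n true ↔ av n ≤ p 0 ∧ p 0 ≤ 2 * av n ∧ p 1 = pulse (av n) (p 0) := by
  have ha := av_pos n
  simp only [Jset, Set.mem_union, Set.mem_setOf_eq, c1 n, c2 n, c3 n,
    (show (1:ℝ)/2^(n:ℕ) = av n from rfl)]
  constructor
  · rintro ((⟨h1, h2, h3⟩ | ⟨h1, h2, h3⟩) | ⟨h1, h2, h3⟩)
    · exact ⟨by linarith, h2, by rw [h3, pulse_eq_right h1]⟩
    · exact ⟨by linarith, by linarith, by rw [h3, pulse_eq_mid h1 h2]⟩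
    · exact ⟨h1, by linarith, by rw [h3, pulse_eq_left h1 h2]⟩
  · rintro ⟨h1, h2, h3⟩
    rcases le_or_gt (p 0) (5/4 * av n) with hc1 | hc1
    · exact Or.inr ⟨h1, hc1, by rw [h3, pulse_eq_left h1 hc1]⟩
    · rcases le_or_gt (p 0) (3/2 * av n) with hc2 | hc2
      · exact Or.inl (Or.inr ⟨le_of_lt hc1, hc2, by rw [h3, pulse_eq_mid (le_of_lt hc1) hc2]⟩)
      · exact Or.inl (Or.inl ⟨le_of_lt hc2, h2, by rw [h3, pulse_eq_right (le_of_lt hc2)]⟩)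

lemma mem_J_bounds {n : ℕ+} {b : Bool} {p : E2} (hp : p ∈ Jset n b) :
    av n ≤ p 0 ∧ p 0 ≤ 2 * av n ∧ 0 ≤ p 1 ∧ p 1 ≤ p 0 - av n ∧
      p 1 ≤ max 0 (3/2 * av n - p 0) := by
  cases b
  · rw [mem_false_iff] at hp
    obtain ⟨h1, h2, h3⟩ := hp
    exact ⟨h1, h2, by rw [h3], by rw [h3]; linarith, by rw [h3]; exact le_max_left _ _⟩
  · rw [mem_true_iff] at hp
    obtain ⟨h1, h2, h3⟩ := hp
    exact ⟨h1, h2, h3 ▸ pulse_nonneg _ _, h3 ▸ pulse_le_sub h1, h3 ▸ pulse_le_max _ _⟩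

lemma height_J_cross {n m : ℕ+} {b c : Bool} {p q : E2} (hnm : n < m)
    (hp : p ∈ Jset n b) (hq : q ∈ Jset m c) : |p 1 - q 1| ≤ |p 0 - q 0| := by
  obtain ⟨hp1, hp2, hp3, hp4, hp5⟩ := mem_J_bounds hp
  obtain ⟨hq1, hq2, hq3, hq4, hq5⟩ := mem_J_bounds hq
  have h2a := two_av_le hnm
  have ham := av_pos m
  have hle : q 0 ≤ p 0 := by linarith
  rw [abs_of_nonneg (by linarith : (0:ℝ) ≤ p 0 - q 0), abs_le]
  constructor
  · have : q 1 ≤ p 0 - q 0 := le_trans hq5 (max_le (by linarith) (by linarith))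
    linarith
  · linarith

lemma height_Y {u : ℕ+ → Bool} {p q : E2} (hp : p ∈ Yset u) (hq : q ∈ Yset u) :
    |p 1 - q 1| ≤ |p 0 - q 0| := by
  rcases hp with hp | hp
  · obtain ⟨hp0, hp1⟩ := hp
    rcases hq with hq | hq
    · obtain ⟨hq0, hq1⟩ := hq
      rw [hp1, hq1, hp0, hq0]
    · rw [Set.mem_iUnion] at hq; obtain ⟨m, hm⟩ := hq
      obtain ⟨h1, h2, h3, h4, h5⟩ := mem_J_bounds hm
      have := av_pos m
      rw [hp0, hp1, zero_sub, zero_sub, abs_neg, abs_neg, abs_of_nonneg h3,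
        abs_of_nonneg (by linarith : (0:ℝ) ≤ q 0)]
      linarith
  · rw [Set.mem_iUnion] at hp; obtain ⟨n, hn⟩ := hp
    rcases hq with hq | hq
    · obtain ⟨hq0, hq1⟩ := hq
      obtain ⟨h1, h2, h3, h4, h5⟩ := mem_J_bounds hn
      have := av_pos n
      rw [hq0, hq1, sub_zero, sub_zero, abs_of_nonneg h3,
        abs_of_nonneg (by linarith : (0:ℝ) ≤ p 0)]
      linarith
    · rw [Set.mem_iUnion] at hq; obtain ⟨m, hm⟩ := hq
      rcases lt_trichotomy n m with h | h | h
      · exact height_J_cross h hn hm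
      · subst h
        cases hu : u n
        · rw [hu] at hn hm
          rw [mem_false_iff] at hn hm
          rw [hn.2.2, hm.2.2, sub_self, abs_zero]
          exact abs_nonneg _
        · rw [hu] at hn hm
          rw [mem_true_iff] at hn hm
          rw [hn.2.2, hm.2.2]
          exact pulse_lipschitz _ _ _
      · rw [abs_sub_comm, abs_sub_comm (p 0)]
        exact height_J_cross h hm hn

lemma mem_Y_x {u : ℕ+ → Bool} {p : E2} (hp : p ∈ Yset u) : 0 ≤ p 0 ∧ p 0 ≤ 1 := by
  rcases hp with hp | hp
  · rw [hp.1]; norm_num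
  · rw [Set.mem_iUnion] at hp; obtain ⟨n, hn⟩ := hp
    obtain ⟨h1, h2, _, _, _⟩ := mem_J_bounds hn
    have h3 := av_pos n; have h4 := av_le_half n
    exact ⟨by linarith, by linarith⟩

lemma inj_cross {n m : ℕ+} {b c : Bool} {p q : E2} (hnm : n < m)
    (hp : p ∈ Jset n b) (hq : q ∈ Jset m c) (h : p 0 = q 0) : p 1 = 0 ∧ q 1 = 0 := by
  obtain ⟨hp1, hp2, hp3, hp4, hp5⟩ := mem_J_bounds hp
  obtain ⟨hq1, hq2, hq3, hq4, hq5⟩ := mem_J_bounds hq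
  have h2a := two_av_le hnm; have ham := av_pos m
  constructor
  · linarith
  · have h0 : 3/2 * av m - q 0 ≤ 0 := by linarith
    have := le_trans hq5 (max_le le_rfl h0)
    linarith

lemma inj_Y {u : ℕ+ → Bool} {p q : E2} (hp : p ∈ Yset u) (hq : q ∈ Yset u)
    (h : p 0 = q 0) : p = q := by
  apply e2_ext h
  rcases hp with hp | hp
  · obtain ⟨hp0, hp1⟩ := hp
    rcases hq with hq | hq
    · rw [hp1, hq.2]
    · rw [Set.mem_iUnion] at hq; obtain ⟨m, hm⟩ := hq
      obtain ⟨h1, _, _, _, _⟩ := mem_J_bounds hm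
      have := av_pos m
      exfalso; rw [hp0] at h; linarith
  · rw [Set.mem_iUnion] at hp; obtain ⟨n, hn⟩ := hp
    rcases hq with hq | hq
    · obtain ⟨hq0, hq1⟩ := hq
      obtain ⟨h1, _, _, _, _⟩ := mem_J_bounds hn
      have := av_pos n
      exfalso; rw [hq0] at h; linarith
    · rw [Set.mem_iUnion] at hq; obtain ⟨m, hm⟩ := hq
      rcases lt_trichotomy n m with hc | hc | hc
      · obtain ⟨e1, e2⟩ := inj_cross hc hn hm h
        rw [e1, e2]
      · subst hc
        cases hu : u n
        · rw [hu] at hn hm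
          rw [mem_false_iff] at hn hm
          rw [hn.2.2, hm.2.2]
        · rw [hu] at hn hm
          rw [mem_true_iff] at hn hm
          rw [hn.2.2, hm.2.2, h]
      · obtain ⟨e1, e2⟩ := inj_cross hc hm hn h.symm
        rw [e1, e2]

lemma exists_interval {x : ℝ} (hx0 : 0 < x) (hx1 : x ≤ 1) :
    ∃ n : ℕ+, av n ≤ x ∧ x ≤ 2 * av n := by
  classical
  have hex : ∃ k : ℕ, (1/2:ℝ)^k ≤ x := by
    obtain ⟨k, hk⟩ := exists_pow_lt_of_lt_one hx0 (by norm_num : (1/2:ℝ) < 1)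
    exact ⟨k, hk.le⟩
  have hspec : (1/2:ℝ)^(Nat.find hex) ≤ x := Nat.find_spec hex
  rcases Nat.eq_zero_or_pos (Nat.find hex) with h0 | h0
  · rw [h0, pow_zero] at hspec
    have hav : av 1 = 1/2 := by rw [av]; norm_num
    exact ⟨1, by rw [hav]; linarith, by rw [hav]; linarith⟩
  · obtain ⟨j, hj⟩ : ∃ j, Nat.find hex = j + 1 :=
      ⟨Nat.find hex - 1, (Nat.succ_pred_eq_of_pos h0).symm⟩
    have hmin : ¬ (1/2:ℝ)^j ≤ x := Nat.find_min hex (by omega)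
    push_neg at hmin
    refine ⟨⟨Nat.find hex, h0⟩, ?_, ?_⟩
    · rw [div_pow, one_pow] at hspec
      exact hspec
    · rw [div_pow, one_pow] at hmin
      show x ≤ 2 * ((1:ℝ)/2^(Nat.find hex))
      rw [hj, pow_succ]
      have hp : (0:ℝ) < 2^j := by positivity
      have he : 2 * (1/(2^j*2)) = 1/(2^j:ℝ) := by field_simp
      rw [he]
      exact hmin.le

lemma surj_Y (u : ℕ+ → Bool) {x : ℝ} (hx0 : 0 ≤ x) (hx1 : x ≤ 1) :
    ∃ p ∈ Yset u, p 0 = x := by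
  rcases eq_or_lt_of_le hx0 with h0 | h0
  · exact ⟨pt 0 0, Set.mem_union_left _ ⟨rfl, rfl⟩, h0⟩
  · obtain ⟨n, h1, h2⟩ := exists_interval h0 hx1
    cases hu : u n
    · refine ⟨pt x 0, Set.mem_union_right _ ?_, rfl⟩
      rw [Set.mem_iUnion]
      exact ⟨n, by rw [hu, mem_false_iff]; exact ⟨h1, h2, rfl⟩⟩
    · refine ⟨pt x (pulse (av n) x), Set.mem_union_right _ ?_, rfl⟩
      rw [Set.mem_iUnion]
      exact ⟨n, by rw [hu, mem_true_iff]; exact ⟨h1, h2, rfl⟩⟩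

def gmap (u : ℕ+ → Bool) (p : ↥(Yset u)) : ↥(Set.Icc (0:ℝ) 1) :=
  ⟨(p:E2) 0, (mem_Y_x p.2).1, (mem_Y_x p.2).2⟩

lemma gmap_bij (u : ℕ+ → Bool) : Function.Bijective (gmap u) := by
  constructor
  · intro p q h
    exact Subtype.ext (inj_Y p.2 q.2 (congrArg Subtype.val h))
  · rintro ⟨x, hx0, hx1⟩
    obtain ⟨p, hp, hpx⟩ := surj_Y u hx0 hx1
    exact ⟨⟨p, hp⟩, Subtype.ext hpx⟩

noncomputable def eEquiv (u : ℕ+ → Bool) : ↥(Set.Icc (0:ℝ) 1) ≃ ↥(Yset u) :=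
  (Equiv.ofBijective (gmap u) (gmap_bij u)).symm

lemma hup (u : ℕ+ → Bool) (x y : ↥(Yset u)) : |(x:E2) 0 - (y:E2) 0| ≤ dist x y := by
  rw [Subtype.dist_eq]; exact abs0_le_dist _ _

lemma hlow (u : ℕ+ → Bool) (x y : ↥(Yset u)) :
    dist x y ≤ Real.sqrt 2 * |(x:E2) 0 - (y:E2) 0| := by
  rw [Subtype.dist_eq]; exact dist_le_sqrt2 _ _ (height_Y x.2 y.2)

lemma ecoord (u : ℕ+ → Bool) (x : ↥(Set.Icc (0:ℝ) 1)) : ((eEquiv u x : E2)) 0 = (x:ℝ) := by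
  have h : Equiv.ofBijective (gmap u) (gmap_bij u) (eEquiv u x) = x :=
    (Equiv.ofBijective (gmap u) (gmap_bij u)).apply_symm_apply x
  exact congrArg Subtype.val h

lemma hlipe (u : ℕ+ → Bool) (x y : ↥(Set.Icc (0:ℝ) 1)) :
    dist (eEquiv u x) (eEquiv u y) ≤ Real.sqrt 2 * dist x y := by
  calc dist (eEquiv u x) (eEquiv u y)
      ≤ Real.sqrt 2 * |((eEquiv u x : E2)) 0 - ((eEquiv u y : E2)) 0| := hlow u _ _
    _ = Real.sqrt 2 * dist x y := by
        rw [ecoord, ecoord, Subtype.dist_eq, Real.dist_eq]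

lemma hlipg (u : ℕ+ → Bool) (p q : ↥(Yset u)) :
    dist (gmap u p) (gmap u q) ≤ 1 * dist p q := by
  rw [one_mul]
  have h : dist (gmap u p) (gmap u q) = |(p:E2) 0 - (q:E2) 0| := by
    rw [Subtype.dist_eq]
    exact Real.dist_eq _ _
  rw [h]; exact hup u p q

lemma Pmem (u : ℕ+ → Bool) : pt (3/4) 0 ∈ Yset u := by
  apply Set.mem_union_right
  rw [Set.mem_iUnion]
  refine ⟨1, ?_⟩
  have hav : av 1 = 1/2 := by rw [av]; norm_num
  cases hu : u 1
  · rw [mem_false_iff, hav]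
    exact ⟨by norm_num [pt0], by norm_num [pt0], rfl⟩
  · rw [mem_true_iff, hav]
    refine ⟨by norm_num [pt0], by norm_num [pt0], ?_⟩
    show (0:ℝ) = pulse (1/2) (3/4)
    rw [pulse_eq_right (by norm_num)]

lemma Qmem (u : ℕ+ → Bool) : pt 1 0 ∈ Yset u := by
  apply Set.mem_union_right
  rw [Set.mem_iUnion]
  refine ⟨1, ?_⟩
  have hav : av 1 = 1/2 := by rw [av]; norm_num
  cases hu : u 1
  · rw [mem_false_iff, hav]
    exact ⟨by norm_num [pt0], by norm_num [pt0], rfl⟩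
  · rw [mem_true_iff, hav]
    refine ⟨by norm_num [pt0], by norm_num [pt0], ?_⟩
    show (0:ℝ) = pulse (1/2) 1
    rw [pulse_eq_right (by norm_num)]

lemma dil_g_eq_one (u : ℕ+ → Bool) : dil (gmap u) = 1 := by
  have hmem : (1:ℝ) ∈ {K : ℝ | ∀ p q : ↥(Yset u), dist (gmap u p) (gmap u q) ≤ K * dist p q} :=
    hlipg u
  have hlb : ∀ K ∈ {K : ℝ | ∀ p q : ↥(Yset u), dist (gmap u p) (gmap u q) ≤ K * dist p q},
      (1:ℝ) ≤ K := by
    intro K hK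
    have hPQ : dist (⟨pt (3/4) 0, Pmem u⟩ : ↥(Yset u)) ⟨pt 1 0, Qmem u⟩ = 1/4 := by
      rw [Subtype.dist_eq, dist_e2]
      show Real.sqrt (((3/4:ℝ) - 1)^2 + ((0:ℝ) - 0)^2) = 1/4
      rw [show ((3/4:ℝ) - 1)^2 + ((0:ℝ) - 0)^2 = (1/4)^2 by norm_num,
        Real.sqrt_sq (by norm_num)]
    have h2 : dist (gmap u ⟨pt (3/4) 0, Pmem u⟩) (gmap u ⟨pt 1 0, Qmem u⟩) = 1/4 := by
      rw [Subtype.dist_eq]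
      show dist ((3:ℝ)/4) 1 = 1/4
      rw [Real.dist_eq]; norm_num
    have := hK (⟨pt (3/4) 0, Pmem u⟩ : ↥(Yset u)) ⟨pt 1 0, Qmem u⟩
    rw [hPQ, h2] at this
    linarith
  exact le_antisymm (csInf_le ⟨1, hlb⟩ hmem) (le_csInf ⟨1, hmem⟩ hlb)

lemma dil_e_bounds (u : ℕ+ → Bool) :
    1 ≤ dil (eEquiv u : ↥(Set.Icc (0:ℝ) 1) → ↥(Yset u)) ∧
    dil (eEquiv u : ↥(Set.Icc (0:ℝ) 1) → ↥(Yset u)) ≤ Real.sqrt 2 := by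
  have hmem : Real.sqrt 2 ∈
      {K : ℝ | ∀ x y : ↥(Set.Icc (0:ℝ) 1), dist (eEquiv u x) (eEquiv u y) ≤ K * dist x y} :=
    hlipe u
  have hlb : ∀ K ∈ {K : ℝ | ∀ x y : ↥(Set.Icc (0:ℝ) 1),
      dist (eEquiv u x) (eEquiv u y) ≤ K * dist x y}, (1:ℝ) ≤ K := by
    intro K hK
    have h0m : (0:ℝ) ∈ Set.Icc (0:ℝ) 1 := by norm_num
    have h1m : (1:ℝ) ∈ Set.Icc (0:ℝ) 1 := by norm_num
    have hd01 : dist (⟨0, h0m⟩ : ↥(Set.Icc (0:ℝ) 1)) ⟨1, h1m⟩ = 1 := by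
      rw [Subtype.dist_eq, Real.dist_eq]; norm_num
    have hge : (1:ℝ) ≤ dist (eEquiv u ⟨0, h0m⟩) (eEquiv u ⟨1, h1m⟩) := by
      have h := hup u (eEquiv u ⟨0, h0m⟩) (eEquiv u ⟨1, h1m⟩)
      rw [ecoord u ⟨0, h0m⟩, ecoord u ⟨1, h1m⟩] at h
      norm_num at h
      exact h
    have := hK ⟨0, h0m⟩ ⟨1, h1m⟩
    rw [hd01, mul_one] at this
    linarith
  exact ⟨le_csInf ⟨_, hmem⟩ hlb, csInf_le ⟨1, hlb⟩ hmem⟩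
end ProjAux

open ProjAux in
/-- The first-coordinate projection `f_u : Y_u → [0,1]` is a bijection with
`(1/√2) d(x,y) ≤ |f_u x - f_u y| ≤ d(x,y)`; consequently
`d_L([0,1], Y_u) ≤ (1/2) log 2`. -/
theorem projection_biLipschitz (u : ℕ+ → Bool) :
    (∃ g : ↥(Yset u) → ↥(Set.Icc (0:ℝ) 1),
      (∀ x : ↥(Yset u), (g x : ℝ) = (x : E2) 0) ∧ Function.Bijective g ∧
      (∀ x y : ↥(Yset u),
        (1 / Real.sqrt 2) * dist x y ≤ |(x : E2) 0 - (y : E2) 0| ∧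
        |(x : E2) 0 - (y : E2) 0| ≤ dist x y)) ∧
    lipDist ↥(Set.Icc (0:ℝ) 1) ↥(Yset u) ≤ ENNReal.ofReal ((1/2) * Real.log 2) := by
  have hs2 : (0:ℝ) < Real.sqrt 2 := Real.sqrt_pos.mpr (by norm_num)
  constructor
  · refine ⟨gmap u, fun x => rfl, gmap_bij u, fun x y => ⟨?_, hup u x y⟩⟩
    rw [div_mul_eq_mul_div, one_mul, div_le_iff₀ hs2, mul_comm]
    exact hlow u x y
  · have hBL : IsBiLipschitzEquiv (eEquiv u) := by
      constructor
      · refine ⟨Real.toNNReal (Real.sqrt 2), LipschitzWith.of_dist_le_mul fun x y => ?_⟩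
        rw [Real.coe_toNNReal _ (Real.sqrt_nonneg 2)]
        exact hlipe u x y
      · refine ⟨1, LipschitzWith.of_dist_le_mul fun p q => ?_⟩
        rw [NNReal.coe_one]
        exact hlipg u p q
    have hkey : lipDist ↥(Set.Icc (0:ℝ) 1) ↥(Yset u) ≤ ENNReal.ofReal (lipCost (eEquiv u)) :=
      iInf₂_le (eEquiv u) hBL
    refine le_trans hkey (ENNReal.ofReal_le_ofReal ?_)
    obtain ⟨hge, hle⟩ := dil_e_bounds u
    have hsymmEq : ((eEquiv u).symm : ↥(Yset u) → ↥(Set.Icc (0:ℝ) 1)) = gmap u := rfl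
    simp only [lipCost]
    rw [hsymmEq, dil_g_eq_one, Real.log_one, abs_zero, add_zero,
      abs_of_nonneg (Real.log_nonneg hge)]
    calc Real.log (dil (⇑(eEquiv u))) ≤ Real.log (Real.sqrt 2) :=
          Real.log_le_log (by linarith) hle
      _ = 1/2 * Real.log 2 := by rw [Real.log_sqrt (by norm_num)]; ring
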